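/- The map ϱ is admissible with the linear order ≤_XY: for all α, β, γ ∈ Ĩ with α ≤_XY β ≤_XY γ, one has ϱ(α, β) ≤ ϱ(α, γ) and ϱ(β, γ) ≤ ϱ(α, γ). -/
import Mathlib

/-- The set of intuitionistic fuzzy values (IFVs). -/
def Itilde : Set (ℝ × ℝ) :=
  {p | 0 ≤ p.1 ∧ p.1 ≤ 1 ∧ 0 ≤ p.2 ∧ p.2 ≤ 1 ∧ p.1 + p.2 ≤ 1}

/-- Score degree `s(α) = μ_α - ν_α`. -/
def score (p : ℝ × ℝ) : ℝ := p.1 - p.2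

/-- Accuracy degree `h(α) = μ_α + ν_α`. -/
def accuracy (p : ℝ × ℝ) : ℝ := p.1 + p.2

/-- The Xu–Yager linear order `≤_XY`: `α ≤_XY β` iff `s(α) < s(β)`, or
`s(α) = s(β)` and `h(α) ≤ h(β)`. -/
def xyLE (a b : ℝ × ℝ) : Prop :=
  score a < score b ∨ (score a = score b ∧ accuracy a ≤ accuracy b)

/-- The distance measure `ϱ` of Wu et al. -/
noncomputable def vrho (a b : ℝ × ℝ) : ℝ :=
  if score a ≠ score b then (1 + |score a - score b|) / 3
  else |accuracy a - accuracy b| / 3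

/-- `ϱ` is admissible with the linear order `≤_XY`: if `α ≤_XY β ≤_XY γ`, then
`ϱ(α, β) ≤ ϱ(α, γ)` and `ϱ(β, γ) ≤ ϱ(α, γ)`. -/
theorem vrho_admissible_xy (a b c : ℝ × ℝ)
    (ha : a ∈ Itilde) (hb : b ∈ Itilde) (hc : c ∈ Itilde)
    (hab : xyLE a b) (hbc : xyLE b c) :
    vrho a b ≤ vrho a c ∧ vrho b c ≤ vrho a c := by
  obtain ⟨ha1, ha2, ha3, ha4, ha5⟩ := ha
  obtain ⟨hb1, hb2, hb3, hb4, hb5⟩ := hb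
  obtain ⟨hc1, hc2, hc3, hc4, hc5⟩ := hc
  simp only [xyLE] at hab hbc
  unfold vrho score accuracy at *
  rcases hab with h1 | ⟨h1, h1'⟩ <;> rcases hbc with h2 | ⟨h2, h2'⟩
  · have h3 : a.1 - a.2 < c.1 - c.2 := h1.trans h2
    rw [if_pos h1.ne, if_pos h3.ne, if_pos h2.ne,
      abs_of_nonpos (by linarith), abs_of_nonpos (by linarith),
      abs_of_nonpos (by linarith)]
    constructor <;> linarith
  · have h3 : a.1 - a.2 < c.1 - c.2 := h2 ▸ h1
    rw [if_pos h1.ne, if_pos h3.ne, if_neg (not_ne_iff.mpr h2),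
      abs_of_nonpos (by linarith), abs_of_nonpos (by linarith),
      abs_of_nonpos (by linarith : b.1 + b.2 - (c.1 + c.2) ≤ 0)]
    constructor <;> linarith
  · have h3 : a.1 - a.2 < c.1 - c.2 := h1 ▸ h2
    rw [if_neg (not_ne_iff.mpr h1), if_pos h3.ne, if_pos h2.ne,
      abs_of_nonpos (by linarith : a.1 - a.2 - (c.1 - c.2) ≤ 0),
      abs_of_nonpos (by linarith : b.1 - b.2 - (c.1 - c.2) ≤ 0),
      abs_of_nonpos (by linarith : a.1 + a.2 - (b.1 + b.2) ≤ 0)]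
    constructor <;> linarith
  · have h3 : a.1 - a.2 = c.1 - c.2 := h1.trans h2
    rw [if_neg (not_ne_iff.mpr h1), if_neg (not_ne_iff.mpr h2), if_neg (not_ne_iff.mpr h3),
      abs_of_nonpos (by linarith : a.1 + a.2 - (b.1 + b.2) ≤ 0),
      abs_of_nonpos (by linarith : b.1 + b.2 - (c.1 + c.2) ≤ 0),
      abs_of_nonpos (by linarith : a.1 + a.2 - (c.1 + c.2) ≤ 0)]
    constructor <;> linarith
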